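/- Let (𝔊, ·, [·,·]) be a transposed Poisson superalgebra. Then for all homogeneous u, v, x, y ∈ 𝔊: 2 u·v·[x,y] = (−1)^{|x||v|} [u·x, v·y] + (−1)^{|u|(|x|+|v|)} [v·x, u·y]. -/

import Mathlib

/-- The sign `(-1)^{ij}` in a field `K`, for parities `i j : ZMod 2`. -/
def sg (K : Type*) [Field K] (i j : ZMod 2) : K := (-1) ^ (i.val * j.val)

lemma val2_aux : ZMod.val (2 : ZMod 2) = 0 := rfl

lemma neg_one_pow_congr_mod2 {K : Type*} [Field K] (a b : ℕ) (h : a % 2 = b % 2) :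
    (-1 : K) ^ a = (-1) ^ b := by
  rw [neg_one_pow_eq_pow_mod_two, h, ← neg_one_pow_eq_pow_mod_two]

lemma sg_mul_sg {K : Type*} [Field K] (i p q : ZMod 2) :
    sg K i q * sg K i p = sg K i (p + q) := by
  unfold sg; rw [← pow_add]; apply neg_one_pow_congr_mod2; revert i p q; decide

lemma sg_swap_pow {K : Type*} [Field K] (p q i : ZMod 2) :
    sg K (q + i) p = ((-1 : K) ^ (p.val * (i.val + q.val))) := by
  unfold sg; apply neg_one_pow_congr_mod2; revert i p q; decide

/-- in a transposed Poisson superalgebra `(V, m, b)` over a field `K` of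
characteristic zero, for all homogeneous `u, v, x, y` of parities `p, q, i, j`:
`2 u·v·[x,y] = (−1)^{|x||v|}[u·x, v·y] + (−1)^{|u|(|x|+|v|)}[v·x, u·y]`. -/
theorem tpsa_identity_five
    {K V : Type*} [Field K] [CharZero K] [AddCommGroup V] [Module K V]
    (𝒢 : ZMod 2 → Submodule K V) [DirectSum.Decomposition 𝒢]
    (m : V →ₗ[K] V →ₗ[K] V) (b : V →ₗ[K] V →ₗ[K] V)
    (hm_mem : ∀ (i j : ZMod 2) (x y : V), x ∈ 𝒢 i → y ∈ 𝒢 j → m x y ∈ 𝒢 (i + j))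
    (hassoc : ∀ x y z : V, m (m x y) z = m x (m y z))
    (hcomm : ∀ (i j : ZMod 2) (x y : V), x ∈ 𝒢 i → y ∈ 𝒢 j → m x y = sg K i j • m y x)
    (hb_mem : ∀ (i j : ZMod 2) (x y : V), x ∈ 𝒢 i → y ∈ 𝒢 j → b x y ∈ 𝒢 (i + j))
    (hskew : ∀ (i j : ZMod 2) (x y : V), x ∈ 𝒢 i → y ∈ 𝒢 j →
      b x y = -(sg K i j • b y x))
    (hjacobi : ∀ (i j k : ZMod 2) (x y z : V), x ∈ 𝒢 i → y ∈ 𝒢 j → z ∈ 𝒢 k →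
      b x (b y z) = b (b x y) z + sg K i j • b y (b x z))
    (hcompat : ∀ (i j k : ZMod 2) (x y z : V), x ∈ 𝒢 i → y ∈ 𝒢 j → z ∈ 𝒢 k →
      (2 : K) • m z (b x y) = b (m z x) y + sg K i k • b x (m z y))
    (p q i j : ZMod 2) (u v x y : V)
    (hu : u ∈ 𝒢 p) (hv : v ∈ 𝒢 q) (hx : x ∈ 𝒢 i) (hy : y ∈ 𝒢 j) :
    (2 : K) • m (m u v) (b x y) =
      sg K i q • b (m u x) (m v y)
        + ((-1 : K) ^ (p.val * (i.val + q.val))) • b (m v x) (m u y) := by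
  have hvx : m v x ∈ 𝒢 (q + i) := hm_mem q i v x hv hx
  have hvy : m v y ∈ 𝒢 (q + j) := hm_mem q j v y hv hy
  have huv : m u v ∈ 𝒢 (p + q) := hm_mem p q u v hu hv
  have h1 := hcompat i j q x y v hx hy hv
  have h2 := hcompat (q + i) j p (m v x) y u hvx hy hu
  have h3 := hcompat i (q + j) p x (m v y) u hx hvy hu
  have h4 := hcompat i j (p + q) x y (m u v) hx hy huv
  have hA : (2 : K) • m (m u v) (b x y)
      = m u (b (m v x) y) + sg K i q • m u (b x (m v y)) := by
    have := congrArg (m u) h1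
    simp only [map_smul, map_add] at this
    rw [← hassoc] at this
    exact this
  have hC : m u (m v x) = m (m u v) x := (hassoc u v x).symm
  have hD : m u (m v y) = m (m u v) y := (hassoc u v y).symm
  rw [hC] at h2
  rw [hD] at h3
  have s1 : sg K i q * sg K i p = sg K i (p + q) := sg_mul_sg i p q
  have s2 : sg K (q + i) p = ((-1 : K) ^ (p.val * (i.val + q.val))) := sg_swap_pow p q i
  rw [s2] at h2
  rw [← s1] at h4
  linear_combination (norm := module) (2 : K) • hA + h2 + sg K i q • h3 - h4
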